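/- Let W be an m×n real matrix with m ≤ n such that every square submatrix of W formed from rows and columns whose intersection pattern is nonzero is invertible (generic matrix). Then W has rank m if and only if for every subset C of the rows, the submatrix of W on those rows has at least |C| nonzero columns. -/

import Mathlib

open Matrix

/-- Edmonds' rank lemma: a generic m×n matrix (every square submatrix with no
zero row and no zero column is invertible) has full row rank iff every set of
rows `C` has at least `|C|` nonzero columns. -/
theorem stmt_0 (m n : ℕ) (hmn : m ≤ n) (W : Matrix (Fin m) (Fin n) ℝ)
    (hgen : ∀ (k : ℕ) (r : Fin k → Fin m) (c : Fin k → Fin n),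
      Function.Injective r → Function.Injective c →
      (∀ i, ∃ j, W (r i) (c j) ≠ 0) → (∀ j, ∃ i, W (r i) (c j) ≠ 0) →
      (W.submatrix r c).det ≠ 0) :
    W.rank = m ↔
      ∀ C : Finset (Fin m),
        C.card ≤ (Finset.univ.filter fun j : Fin n => ∃ i ∈ C, W i j ≠ 0).card := by
  classical
  have hrank_iff : W.rank = m ↔ LinearIndependent ℝ (fun i => W i) := by
    rw [linearIndependent_iff_card_eq_finrank_span, Set.finrank,
      show (fun i => W i) = W.row from rfl, ← rank_eq_finrank_span_row, Fintype.card_fin]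
    exact eq_comm
  rw [hrank_iff]
  constructor
  · -- independent rows ⇒ Hall condition
    intro hW C
    set S : Finset (Fin n) :=
      Finset.univ.filter (fun j : Fin n => ∃ i ∈ C, W i j ≠ 0) with hS
    -- restricted rows
    let v : C → (S → ℝ) := fun i j => W i j
    have hv : LinearIndependent ℝ v := by
      rw [Fintype.linearIndependent_iff]
      intro g hg
      have hWC : LinearIndependent ℝ (fun i : C => W i) :=
        hW.comp _ Subtype.val_injective
      have := Fintype.linearIndependent_iff.mp hWC g ?_
      · exact this
      · funext j
        by_cases hj : j ∈ S
        · have := congrFun hg ⟨j, hj⟩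
          simpa [v] using this
        · simp only [hS, Finset.mem_filter, Finset.mem_univ, true_and,
            not_exists, not_and, not_not] at hj
          simp only [Finset.sum_apply, Pi.smul_apply, Pi.zero_apply, smul_eq_mul]
          exact Finset.sum_eq_zero fun i _ => by
            rw [hj i i.2, mul_zero]
    have := hv.fintype_card_le_finrank
    simpa using this
  · -- Hall condition ⇒ independent rows
    intro hHall
    set t : Fin m → Finset (Fin n) :=
      fun i => Finset.univ.filter (fun j => W i j ≠ 0) with ht
    have hbi : ∀ C : Finset (Fin m),
        C.biUnion t = Finset.univ.filter (fun j : Fin n => ∃ i ∈ C, W i j ≠ 0) := by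
      intro C; ext j; simp [ht]
    obtain ⟨f, hfinj, hf⟩ :=
      (Finset.all_card_le_biUnion_card_iff_exists_injective t).mp
        (fun C => by rw [hbi]; exact hHall C)
    have hfne : ∀ i, W i (f i) ≠ 0 := fun i => by
      have := hf i; simpa [ht] using this
    have hdet : (W.submatrix id f).det ≠ 0 :=
      hgen m id f Function.injective_id hfinj
        (fun i => ⟨i, hfne i⟩) (fun j => ⟨j, hfne j⟩)
    have hunit : IsUnit (W.submatrix id f) :=
      (Matrix.isUnit_iff_isUnit_det _).mpr (isUnit_iff_ne_zero.mpr hdet)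
    have hsub : LinearIndependent ℝ (fun i => (W.submatrix id f) i) :=
      Matrix.linearIndependent_rows_iff_isUnit.mpr hunit
    -- pull back independence through precomposition with f
    have : LinearIndependent ℝ
        (fun i => (LinearMap.funLeft ℝ ℝ f) (W i)) := by
      convert hsub using 2
      rfl
    exact this.of_comp (LinearMap.funLeft ℝ ℝ f)
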